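/- Let R be a commutative ring, n ≥ 1 an integer, and γ ∈ M_{n+1}(R) with block decomposition having upper-left n×n block A, upper-right n×1 column b, lower-left 1×n row c, and lower-right entry d. Let D ∈ M_{n+1}(R) be the matrix whose (k+1)-st row is e_{n+1}ᵀ·γ^{k} for k = 0, 1, …, n, and let N ∈ M_n(R) be the matrix whose (j+1)-st row is c·A^{j} for j = 0, 1, …, n−1. Then det D = (−1)^n · det N. -/

import Mathlib

open Matrix Finset

noncomputable section

/-- Auxiliary rows: `Brow e c A 0 = e`, `Brow e c A (k+1) = (c·A^k, 0)`. -/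
def Brow {R : Type*} [CommRing R] {n : ℕ} (e : Fin (n + 1) → R) (c : Fin n → R)
    (A : Matrix (Fin n) (Fin n) R) : ℕ → Fin (n + 1) → R
  | 0 => e
  | (k + 1) => Fin.snoc (Matrix.vecMul c (A ^ k)) 0

/-- The determinant identity `D⁺(γ) = det(e_{n+1}ᵀ, e_{n+1}ᵀγ, …, e_{n+1}ᵀγ^n)
= (-1)^n · det(c, cA, …, cA^{n-1})` for `γ = [[A, b], [c, d]]`. -/
theorem statement13 (R : Type*) [CommRing R] (n : ℕ) (hn : 1 ≤ n)
    (γ : Matrix (Fin (n + 1)) (Fin (n + 1)) R)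
    (A : Matrix (Fin n) (Fin n) R)
    (hA : A = Matrix.of fun a b => γ (Fin.castSucc a) (Fin.castSucc b))
    (c : Fin n → R) (hc : c = fun b => γ (Fin.last n) (Fin.castSucc b))
    (e : Fin (n + 1) → R) (he : e = fun j => if j = Fin.last n then 1 else 0)
    (D : Matrix (Fin (n + 1)) (Fin (n + 1)) R)
    (hD : D = Matrix.of fun (k : Fin (n + 1)) (j : Fin (n + 1)) =>
      Matrix.vecMul e (γ ^ (k : ℕ)) j)
    (N : Matrix (Fin n) (Fin n) R)
    (hN : N = Matrix.of fun (k : Fin n) (j : Fin n) => Matrix.vecMul c (A ^ (k : ℕ)) j) :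
    D.det = (-1) ^ n * N.det := by
  classical
  set t : ℕ → R := fun m => Matrix.vecMul e (γ ^ m) (Fin.last n) with ht
  have he_last : e (Fin.last n) = 1 := by simp [he]
  have ht0 : t 0 = 1 := by simp [ht, he_last]
  have hB0 : Brow e c A 0 = e := rfl
  have hBlast : ∀ m : ℕ, Brow e c A (m + 1) (Fin.last n) = 0 := by
    intro m; simp [Brow, Fin.snoc_last]
  have hBcast : ∀ (m : ℕ) (p : Fin n),
      Brow e c A (m + 1) (Fin.castSucc p) = Matrix.vecMul c (A ^ m) p := by
    intro m p; simp [Brow, Fin.snoc_castSucc]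
  have hγA : ∀ (q p : Fin n), γ (Fin.castSucc q) (Fin.castSucc p) = A q p := by
    intro q p; rw [hA]; rfl
  -- the basic recursion for the rows
  have hlem : ∀ m : ℕ, Matrix.vecMul (Brow e c A m) γ
      = Brow e c A (m + 1) + (Matrix.vecMul (Brow e c A m) γ (Fin.last n)) • e := by
    intro m
    funext j
    refine Fin.lastCases ?_ ?_ j
    · simp [hBlast, he_last]
    · intro p
      have hecast : e (Fin.castSucc p) = 0 := by
        simp [he, (Fin.castSucc_lt_last p).ne]
      have hrhs : (Brow e c A (m + 1) + (Matrix.vecMul (Brow e c A m) γ (Fin.last n)) • e)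
          (Fin.castSucc p) = Matrix.vecMul c (A ^ m) p := by
        simp [hBcast, hecast]
      rw [hrhs]
      cases m with
      | zero =>
        rw [pow_zero, Matrix.vecMul_one, hB0]
        simp only [Matrix.vecMul, dotProduct]
        rw [Finset.sum_eq_single (Fin.last n)]
        · rw [he_last, one_mul, hc]
        · intro b _ hb
          have : e b = 0 := by simp [he, hb]
          rw [this, zero_mul]
        · simp
      | succ k =>
        have h1 : Matrix.vecMul (Brow e c A (k + 1)) γ (Fin.castSucc p)
            = Matrix.vecMul (Matrix.vecMul c (A ^ k)) A p := by
          simp only [Matrix.vecMul, dotProduct]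
          rw [Fin.sum_univ_castSucc]
          simp only [Brow, Fin.snoc_castSucc, Fin.snoc_last, zero_mul, add_zero]
          refine Finset.sum_congr rfl ?_
          intro q _
          rw [hγA]
          rfl
        rw [h1, Matrix.vecMul_vecMul, ← pow_succ]
  -- linearity helpers
  have hsmul : ∀ (a : R) (v : Fin (n + 1) → R),
      Matrix.vecMul (a • v) γ = a • Matrix.vecMul v γ := by
    intro a v; funext j
    simp [Matrix.vecMul, dotProduct, Finset.mul_sum, mul_assoc]
  have hsumv : ∀ (s : Finset ℕ) (f : ℕ → Fin (n + 1) → R),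
      Matrix.vecMul (∑ i ∈ s, f i) γ = ∑ i ∈ s, Matrix.vecMul (f i) γ := by
    intro s f
    induction s using Finset.induction_on with
    | empty => simp [Matrix.zero_vecMul]
    | insert a s h ih =>
      rw [Finset.sum_insert h, Finset.sum_insert h, Matrix.add_vecMul, ih]
  -- the key expansion
  have key : ∀ k : ℕ, Matrix.vecMul e (γ ^ k)
      = ∑ i ∈ Finset.range (k + 1), t (k - i) • Brow e c A i := by
    intro k
    induction k with
    | zero => simp [ht0, hB0, Matrix.vecMul_one]
    | succ k ih =>
      have h2 : Matrix.vecMul e (γ ^ (k + 1))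
          = ∑ i ∈ Finset.range (k + 1),
              (t (k - i) • Brow e c A (i + 1)
                + (t (k - i) * Matrix.vecMul (Brow e c A i) γ (Fin.last n)) • e) := by
        rw [pow_succ, ← Matrix.vecMul_vecMul, ih, hsumv]
        refine Finset.sum_congr rfl ?_
        intro i _
        rw [hsmul, hlem i, smul_add, smul_smul]
        simp [hBlast, he_last]
      set S : R := ∑ i ∈ Finset.range (k + 1),
          t (k - i) * Matrix.vecMul (Brow e c A i) γ (Fin.last n) with hS
      have h3 : Matrix.vecMul e (γ ^ (k + 1))
          = (∑ i ∈ Finset.range (k + 1), t (k - i) • Brow e c A (i + 1)) + S • e := by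
        rw [h2, Finset.sum_add_distrib, ← Finset.sum_smul]
      have hSt : S = t (k + 1) := by
        have h4 := congrFun h3 (Fin.last n)
        simp only [Pi.add_apply, Pi.smul_apply, Finset.sum_apply, smul_eq_mul] at h4
        rw [Finset.sum_eq_zero (fun i _ => by rw [hBlast i, mul_zero]), zero_add,
          he_last, mul_one] at h4
        exact h4.symm
      rw [h3, hSt,
        Finset.sum_range_succ' (fun i => t (k + 1 - i) • Brow e c A i) (k + 1)]
      congr 1
      · refine Finset.sum_congr rfl ?_
        intro i _
        rw [Nat.succ_sub_succ]
  -- matrices T and B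
  set T : Matrix (Fin (n + 1)) (Fin (n + 1)) R :=
    Matrix.of (fun k i : Fin (n + 1) => if (i : ℕ) ≤ (k : ℕ) then t ((k : ℕ) - (i : ℕ)) else 0)
    with hT
  set B : Matrix (Fin (n + 1)) (Fin (n + 1)) R :=
    Matrix.of (fun i j : Fin (n + 1) => Brow e c A (i : ℕ) j) with hBdef
  have hDTB : D = T * B := by
    ext k j
    rw [hD, Matrix.mul_apply]
    simp only [Matrix.of_apply, hT, hBdef]
    rw [congrFun (key (k : ℕ)) j, Finset.sum_apply]
    rw [Fin.sum_univ_eq_sum_range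
      (fun i : ℕ => (if i ≤ (k : ℕ) then t ((k : ℕ) - i) else 0) * Brow e c A i j) (n + 1)]
    rw [← Finset.sum_subset (Finset.range_subset_range.mpr (by omega : (k : ℕ) + 1 ≤ n + 1))]
    · refine Finset.sum_congr rfl ?_
      intro i hi
      rw [Finset.mem_range] at hi
      rw [if_pos (by omega), Pi.smul_apply, smul_eq_mul]
    · intro x _ hx
      rw [Finset.mem_range] at hx
      rw [if_neg (by omega), zero_mul]
  have hdetT : T.det = 1 := by
    have htri : T.BlockTriangular OrderDual.toDual := by
      intro i j hij
      have hlt : (i : ℕ) < (j : ℕ) := hij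
      simp only [hT, Matrix.of_apply]
      rw [if_neg (by omega)]
    rw [Matrix.det_of_lowerTriangular T htri]
    refine Finset.prod_eq_one ?_
    intro i _
    simp [hT, ht0]
  -- the permuted block matrix
  set P : Matrix (Fin (n + 1)) (Fin (n + 1)) R :=
    Matrix.of (fun i j : Fin (n + 1) =>
      Fin.lastCases (motive := fun _ => Fin (n + 1) → R) e (fun m => Fin.snoc (α := fun _ => R) (fun q => N m q) 0) i j) with hP
  have hPlast : ∀ j, P (Fin.last n) j = e j := by
    intro j; simp [hP, Fin.lastCases_last]
  have hPcast : ∀ (m : Fin n) (j), P (Fin.castSucc m) j = Fin.snoc (α := fun _ => R) (fun q => N m q) 0 j := by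
    intro m j; simp [hP, Fin.lastCases_castSucc]
  set ρ : Equiv.Perm (Fin (n + 1)) := (finRotate (n + 1)).symm with hρ
  have hρ0 : ρ 0 = Fin.last n := by
    rw [hρ, Equiv.symm_apply_eq, finRotate_last]
  have hρs : ∀ m : Fin n, ρ m.succ = m.castSucc := by
    intro m
    rw [hρ, Equiv.symm_apply_eq, finRotate_succ_apply, Fin.coeSucc_eq_succ]
  have hBperm : B = Matrix.of (fun i => P (ρ i)) := by
    ext i j
    refine Fin.cases ?_ ?_ i
    · simp only [Matrix.of_apply, hρ0, hPlast]
      rfl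
    · intro m
      have hfix : (fun q => N m q) = Matrix.vecMul c (A ^ (m : ℕ)) := by
        funext q; rw [hN]; rfl
      simp only [Matrix.of_apply, hρs, hPcast, hfix, hBdef, Fin.val_succ]
      rfl
  have hdetP : P.det = N.det := by
    rw [Matrix.det_succ_row P (Fin.last n)]
    rw [Finset.sum_eq_single (Fin.last n)]
    · have h1 : P (Fin.last n) (Fin.last n) = 1 := by rw [hPlast, he_last]
      have h2 : P.submatrix (Fin.last n).succAbove (Fin.last n).succAbove = N := by
        ext m q
        rw [Matrix.submatrix_apply, Fin.succAbove_last, hPcast, Fin.snoc_castSucc]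
      rw [h1, h2, mul_one]
      have : ((-1 : R)) ^ ((Fin.last n : ℕ) + (Fin.last n : ℕ)) = 1 := by
        rw [Fin.val_last]
        exact Even.neg_one_pow ⟨n, rfl⟩
      rw [this, one_mul]
    · intro j _ hj
      have : P (Fin.last n) j = 0 := by
        rw [hPlast]; simp [he, hj]
      rw [this, mul_zero, zero_mul]
    · simp
  have hsign : (Equiv.Perm.sign ρ : ℤ) = (-1) ^ n := by
    have h5 : Equiv.Perm.sign ρ = Equiv.Perm.sign (finRotate (n + 1)) := by
      rw [hρ]
      exact Equiv.Perm.sign_symm _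
    rw [h5, sign_finRotate]
    simp
  have hdetB : B.det = (-1) ^ n * N.det := by
    rw [hBperm]
    have h6 : (Matrix.of fun i => P (ρ i)).det = ((Equiv.Perm.sign ρ : ℤ) : R) * P.det :=
      Matrix.det_permute ρ P
    rw [h6, hdetP, hsign]
    push_cast
    ring
  rw [hDTB, Matrix.det_mul, hdetT, one_mul, hdetB]
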